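/- For any fixed X ∈ ℝ^{n×p}, the linear mapping J_A(X) on ℝ^{n×p} given by J_A(X)[D] = (1/8) D (15 I_p - 10 X^T X + 3 (X^T X)^2) - X Φ(X^T D) + (3/2) X Φ(Φ(X^T D)(X^T X - I_p)) is self-adjoint with respect to the trace inner product ⟨A,B⟩ = tr(A^T B). -/
import Mathlib


open Matrix

/-- The symmetrization operator `Φ(M) = (M + Mᵀ)/2`. -/
noncomputable def symPart {p : ℕ} (M : Matrix (Fin p) (Fin p) ℝ) : Matrix (Fin p) (Fin p) ℝ :=
  (1 / 2 : ℝ) • (M + Mᵀ)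

/-- The Jacobian of the constraint dissolving mapping at `X` applied to `D`. -/
noncomputable def cdJac {n p : ℕ} (X D : Matrix (Fin n) (Fin p) ℝ) :
    Matrix (Fin n) (Fin p) ℝ :=
  (1 / 8 : ℝ) • (D * ((15 : ℝ) • (1 : Matrix (Fin p) (Fin p) ℝ)
      - (10 : ℝ) • (Xᵀ * X) + (3 : ℝ) • (Xᵀ * X) ^ 2))
    - X * symPart (Xᵀ * D)
    + (3 / 2 : ℝ) • (X * symPart (symPart (Xᵀ * D) * (Xᵀ * X - 1)))

lemma symPart_transpose {p : ℕ} (M : Matrix (Fin p) (Fin p) ℝ) :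
    (symPart M)ᵀ = symPart M := by
  simp [symPart, transpose_add, add_comm]

lemma symPart_of_transpose {p : ℕ} (M : Matrix (Fin p) (Fin p) ℝ) :
    symPart Mᵀ = symPart M := by
  simp [symPart, add_comm]

lemma trace_tt {m k : ℕ} (A B : Matrix (Fin m) (Fin k) ℝ) :
    Matrix.trace (Aᵀ * B) = Matrix.trace (Bᵀ * A) := by
  rw [← Matrix.trace_transpose (Aᵀ * B), transpose_mul, transpose_transpose]

lemma trace_symm_right {m k : ℕ} (A B : Matrix (Fin m) (Fin k) ℝ)
    (P : Matrix (Fin k) (Fin k) ℝ) (hP : Pᵀ = P) :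
    Matrix.trace (Aᵀ * (B * P)) = Matrix.trace (Bᵀ * (A * P)) := by
  calc Matrix.trace (Aᵀ * (B * P))
      = Matrix.trace ((Aᵀ * (B * P))ᵀ) := (Matrix.trace_transpose _).symm
    _ = Matrix.trace ((P * Bᵀ) * A) := by
        rw [transpose_mul, transpose_mul, transpose_transpose, hP]
    _ = Matrix.trace ((Bᵀ * A) * P) := by
        rw [Matrix.mul_assoc, Matrix.trace_mul_comm, Matrix.mul_assoc]
    _ = Matrix.trace (Bᵀ * (A * P)) := by rw [Matrix.mul_assoc]

lemma trace_symPart_mul {p : ℕ} (M N : Matrix (Fin p) (Fin p) ℝ) :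
    Matrix.trace (symPart M * N) = Matrix.trace (M * symPart N) := by
  have h : Matrix.trace (Mᵀ * N) = Matrix.trace (M * Nᵀ) := by
    rw [← Matrix.trace_transpose (Mᵀ * N), transpose_mul, transpose_transpose,
      Matrix.trace_mul_comm]
  simp only [symPart, Matrix.smul_mul, Matrix.mul_smul, Matrix.add_mul, Matrix.mul_add,
    Matrix.trace_smul, Matrix.trace_add, h]

lemma symPart_flip {n p : ℕ} (X U : Matrix (Fin n) (Fin p) ℝ) :
    symPart (Uᵀ * X) = symPart (Xᵀ * U) := by
  rw [← symPart_of_transpose (Xᵀ * U), transpose_mul, transpose_transpose]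

theorem stmt_9 {n p : ℕ} (X : Matrix (Fin n) (Fin p) ℝ)
    (D W : Matrix (Fin n) (Fin p) ℝ) :
    Matrix.trace ((cdJac X D)ᵀ * W) = Matrix.trace (Dᵀ * cdJac X W) := by
  rw [trace_tt]
  have hSsym : (Xᵀ * X)ᵀ = Xᵀ * X := by rw [transpose_mul, transpose_transpose]
  have hPsym : ((15 : ℝ) • (1 : Matrix (Fin p) (Fin p) ℝ)
      - (10 : ℝ) • (Xᵀ * X) + (3 : ℝ) • (Xᵀ * X) ^ 2)ᵀ
      = (15 : ℝ) • (1 : Matrix (Fin p) (Fin p) ℝ)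
      - (10 : ℝ) • (Xᵀ * X) + (3 : ℝ) • (Xᵀ * X) ^ 2 := by
    simp [transpose_add, transpose_sub, transpose_smul, transpose_pow, hSsym]
  have hCsym : ((Xᵀ * X) - 1)ᵀ = (Xᵀ * X) - 1 := by
    simp [transpose_sub, hSsym]
  -- first term
  have h1 : Matrix.trace (Wᵀ * (D * ((15 : ℝ) • (1 : Matrix (Fin p) (Fin p) ℝ)
        - (10 : ℝ) • (Xᵀ * X) + (3 : ℝ) • (Xᵀ * X) ^ 2)))
      = Matrix.trace (Dᵀ * (W * ((15 : ℝ) • (1 : Matrix (Fin p) (Fin p) ℝ)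
        - (10 : ℝ) • (Xᵀ * X) + (3 : ℝ) • (Xᵀ * X) ^ 2))) :=
    trace_symm_right W D _ hPsym
  -- second term
  have h2 : ∀ U V : Matrix (Fin n) (Fin p) ℝ,
      Matrix.trace (Uᵀ * (X * symPart (Xᵀ * V))) =
      Matrix.trace ((Xᵀ * V) * symPart (Xᵀ * U)) := by
    intro U V
    calc Matrix.trace (Uᵀ * (X * symPart (Xᵀ * V)))
        = Matrix.trace (symPart (Xᵀ * V) * (Uᵀ * X)) := by
          rw [← Matrix.mul_assoc, Matrix.trace_mul_comm]
      _ = Matrix.trace ((Xᵀ * V) * symPart (Uᵀ * X)) := trace_symPart_mul _ _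
      _ = Matrix.trace ((Xᵀ * V) * symPart (Xᵀ * U)) := by rw [symPart_flip]
  have h2' : Matrix.trace (Wᵀ * (X * symPart (Xᵀ * D))) =
      Matrix.trace (Dᵀ * (X * symPart (Xᵀ * W))) := by
    rw [h2 W D, h2 D W, Matrix.trace_mul_comm (Xᵀ * D), trace_symPart_mul]
  -- third term
  have h3 : ∀ U V : Matrix (Fin n) (Fin p) ℝ,
      Matrix.trace (Uᵀ * (X * symPart (symPart (Xᵀ * V) * ((Xᵀ * X) - 1)))) =
      Matrix.trace (symPart (Xᵀ * V) * (((Xᵀ * X) - 1) * symPart (Xᵀ * U))) := by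
    intro U V
    calc Matrix.trace (Uᵀ * (X * symPart (symPart (Xᵀ * V) * ((Xᵀ * X) - 1))))
        = Matrix.trace (symPart (symPart (Xᵀ * V) * ((Xᵀ * X) - 1)) * (Uᵀ * X)) := by
          rw [← Matrix.mul_assoc, Matrix.trace_mul_comm]
      _ = Matrix.trace ((symPart (Xᵀ * V) * ((Xᵀ * X) - 1)) * symPart (Uᵀ * X)) :=
          trace_symPart_mul _ _
      _ = Matrix.trace (symPart (Xᵀ * V) * (((Xᵀ * X) - 1) * symPart (Xᵀ * U))) := by
          rw [Matrix.mul_assoc, symPart_flip X U]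
  have h3' : Matrix.trace (Wᵀ * (X * symPart (symPart (Xᵀ * D) * ((Xᵀ * X) - 1)))) =
      Matrix.trace (Dᵀ * (X * symPart (symPart (Xᵀ * W) * ((Xᵀ * X) - 1)))) := by
    rw [h3 W D, h3 D W]
    -- tr (A * (C * B)) = tr (B * (C * A)) for symmetric A, B, C
    calc Matrix.trace (symPart (Xᵀ * D) * (((Xᵀ * X) - 1) * symPart (Xᵀ * W)))
        = Matrix.trace ((symPart (Xᵀ * D) * (((Xᵀ * X) - 1) * symPart (Xᵀ * W)))ᵀ) :=
          (Matrix.trace_transpose _).symm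
      _ = Matrix.trace ((symPart (Xᵀ * W) * ((Xᵀ * X) - 1)) * symPart (Xᵀ * D)) := by
          rw [transpose_mul, transpose_mul, symPart_transpose,
            symPart_transpose, hCsym]
      _ = Matrix.trace (symPart (Xᵀ * W) * (((Xᵀ * X) - 1) * symPart (Xᵀ * D))) := by
          rw [Matrix.mul_assoc]
  simp only [cdJac]
  generalize hP : (15 : ℝ) • (1 : Matrix (Fin p) (Fin p) ℝ)
      - (10 : ℝ) • (Xᵀ * X) + (3 : ℝ) • (Xᵀ * X) ^ 2 = Pm at h1 ⊢
  generalize hKD : symPart (symPart (Xᵀ * D) * ((Xᵀ * X) - 1)) = KD at h3' ⊢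
  generalize hKW : symPart (symPart (Xᵀ * W) * ((Xᵀ * X) - 1)) = KW at h3' ⊢
  simp only [Matrix.mul_sub, Matrix.mul_add, Matrix.mul_smul, Matrix.trace_sub,
    Matrix.trace_add, Matrix.trace_smul, h1, h2', h3']
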